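/- For M = 2, the function Φ_2(x,t,p) defined as (1/√(πt)) ∫_p^∞ exp(−(x−y)²/t) · π^{−1/2}(3/2 − y²) e^{−y²} dy equals (e^{−x²/(1+t)}/(2√π)) · [erfc(F(t,x,p)) · P_2(t,x) − (e^{−F(t,x,p)²}/√π) · Q_2(t,x,p)], where P_2(t,x) = (1+t)^{−1/2} + (1/2)(1+t)^{−3/2} − x²(1+t)^{−5/2}, Q_2(t,x,p) = (√t/(1+t))·(x/(1+t) + p), and F(t,x,p) = √((1+t)/t)·(p − x/(1+t)). -/

import Mathlib

open MeasureTheory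

noncomputable def erfc (z : ℝ) : ℝ :=
  (2 / Real.sqrt Real.pi) * ∫ s in Set.Ioi z, Real.exp (-s ^ 2)

noncomputable def Ffun (t x y : ℝ) : ℝ :=
  Real.sqrt ((1 + t) / t) * (y - x / (1 + t))

noncomputable def P2 (t x : ℝ) : ℝ :=
  (Real.sqrt (1 + t))⁻¹ + (1 / 2) * ((Real.sqrt (1 + t)) ^ 3)⁻¹ -
    x ^ 2 * ((Real.sqrt (1 + t)) ^ 5)⁻¹

noncomputable def Q2 (t x p : ℝ) : ℝ :=
  (Real.sqrt t / (1 + t)) * (x / (1 + t) + p)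

open Set Filter in
lemma aux_int0 (z : ℝ) : IntegrableOn (fun s : ℝ => Real.exp (-s ^ 2)) (Set.Ioi z) := by
  have := (integrable_exp_neg_mul_sq (b := 1) one_pos).integrableOn (s := Set.Ioi z)
  simpa using this

open Set Filter in
lemma aux_int1 (z : ℝ) : IntegrableOn (fun s : ℝ => s * Real.exp (-s ^ 2)) (Set.Ioi z) := by
  have := (integrable_mul_exp_neg_mul_sq (b := 1) one_pos).integrableOn (s := Set.Ioi z)
  simpa using this

open Set Filter in
lemma aux_int2 (z : ℝ) : IntegrableOn (fun s : ℝ => s ^ 2 * Real.exp (-s ^ 2)) (Set.Ioi z) := by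
  have h := (integrable_rpow_mul_exp_neg_mul_sq (b := 1) one_pos (s := 2) (by norm_num)).integrableOn
    (s := Set.Ioi z)
  have : ∀ s : ℝ, s ^ (2 : ℝ) = s ^ 2 := fun s => by
    rw [show (2:ℝ) = ((2:ℕ):ℝ) by norm_num, Real.rpow_natCast]
  simpa [this] using h

open Set Filter in
lemma exp_neg_sq_tendsto : Tendsto (fun s : ℝ => Real.exp (-s ^ 2)) atTop (nhds 0) := by
  apply Real.tendsto_exp_atBot.comp
  exact tendsto_neg_atBot_iff.mpr (tendsto_pow_atTop two_ne_zero)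

open Set Filter in
lemma mul_exp_neg_sq_tendsto : Tendsto (fun s : ℝ => s * Real.exp (-s ^ 2)) atTop (nhds 0) := by
  apply squeeze_zero' (g := fun s : ℝ => s * Real.exp (-s))
  · filter_upwards [eventually_ge_atTop (0:ℝ)] with s hs
    positivity
  · filter_upwards [eventually_ge_atTop (1:ℝ)] with s hs
    have h1 : -s ^ 2 ≤ -s := by nlinarith
    exact mul_le_mul_of_nonneg_left (Real.exp_le_exp.mpr h1) (by linarith)
  · simpa using Real.tendsto_pow_mul_exp_neg_atTop_nhds_zero 1

open Set Filter in
lemma gauss_mom1 (z : ℝ) :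
    ∫ s in Set.Ioi z, s * Real.exp (-s ^ 2) = Real.exp (-z ^ 2) / 2 := by
  have hderiv : ∀ s ∈ Ici z, HasDerivAt (fun s : ℝ => -Real.exp (-s ^ 2) / 2)
      (s * Real.exp (-s ^ 2)) s := by
    intro s _
    have h1 : HasDerivAt (fun s : ℝ => -s ^ 2) (-(2 * s)) s := by
      simpa using (hasDerivAt_pow 2 s).fun_neg
    have h2 := (h1.exp.fun_neg).div_const 2
    exact h2.congr_deriv (by ring)
  have := integral_Ioi_of_hasDerivAt_of_tendsto' hderiv (aux_int1 z)
    (by simpa using (exp_neg_sq_tendsto.neg.div_const 2))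
  rw [this]; ring

open Set Filter in
lemma gauss_mom2 (z : ℝ) :
    ∫ s in Set.Ioi z, s ^ 2 * Real.exp (-s ^ 2) =
      z * Real.exp (-z ^ 2) / 2 + (1 / 2) * ∫ s in Set.Ioi z, Real.exp (-s ^ 2) := by
  have hderiv : ∀ s ∈ Ici z, HasDerivAt (fun s : ℝ => -(s * Real.exp (-s ^ 2)) / 2)
      (s ^ 2 * Real.exp (-s ^ 2) - Real.exp (-s ^ 2) / 2) s := by
    intro s _
    have h1 : HasDerivAt (fun s : ℝ => -s ^ 2) (-(2 * s)) s := by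
      simpa using (hasDerivAt_pow 2 s).fun_neg
    have h2 : HasDerivAt (fun s : ℝ => s * Real.exp (-s ^ 2))
        (1 * Real.exp (-s ^ 2) + s * (Real.exp (-s ^ 2) * -(2 * s))) s :=
      (hasDerivAt_id s).mul h1.exp
    have h3 := (h2.fun_neg).div_const 2
    exact h3.congr_deriv (by ring)
  have hint : IntegrableOn
      (fun s : ℝ => s ^ 2 * Real.exp (-s ^ 2) - Real.exp (-s ^ 2) / 2) (Ioi z) :=
    (aux_int2 z).sub ((aux_int0 z).div_const 2)
  have := integral_Ioi_of_hasDerivAt_of_tendsto' hderiv hint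
    (by simpa using (mul_exp_neg_sq_tendsto.neg.div_const 2))
  rw [integral_sub (aux_int2 z) ((aux_int0 z).div_const 2)] at this
  have hsplit : ∫ s in Ioi z, Real.exp (-s ^ 2) / 2
      = (∫ s in Ioi z, Real.exp (-s ^ 2)) / 2 := integral_div 2 _
  rw [hsplit] at this
  linarith [this]

open Set Filter in
lemma integral_Ioi_comp_sub (g : ℝ → ℝ) (a c : ℝ) :
    ∫ u in Set.Ioi a, g (u - c) = ∫ s in Set.Ioi (a - c), g s := by
  have h := (measurePreserving_sub_right (volume : Measure ℝ) c).setIntegral_preimage_emb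
    (MeasurableEquiv.subRight c).measurableEmbedding g (Set.Ioi (a - c))
  rw [← h]
  congr 1
  ext u
  simp [sub_lt_sub_iff_right]

set_option maxHeartbeats 2000000 in
theorem stmt19 (t x p : ℝ) (ht : 0 < t) :
    (1 / Real.sqrt (Real.pi * t)) *
        (∫ y in Set.Ioi p, Real.exp (-(x - y) ^ 2 / t) *
          ((Real.sqrt Real.pi)⁻¹ * (3 / 2 - y ^ 2) * Real.exp (-y ^ 2))) =
      (Real.exp (-x ^ 2 / (1 + t)) / (2 * Real.sqrt Real.pi)) *
        (erfc (Ffun t x p) * P2 t x -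
          (Real.exp (-(Ffun t x p) ^ 2) / Real.sqrt Real.pi) * Q2 t x p) := by
  have ht1 : (0:ℝ) < 1 + t := by linarith
  set st := Real.sqrt t with hst_def
  set su := Real.sqrt (1 + t) with hsu_def
  set sπ := Real.sqrt Real.pi with hsπ_def
  have hst : 0 < st := Real.sqrt_pos.mpr ht
  have hsu : 0 < su := Real.sqrt_pos.mpr ht1
  have hsπ : 0 < sπ := Real.sqrt_pos.mpr Real.pi_pos
  have hst2 : st ^ 2 = t := Real.sq_sqrt ht.le
  have hsu2 : su ^ 2 = 1 + t := Real.sq_sqrt ht1.le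
  set m := x / (1 + t) with hm_def
  set b := su / st with hb_def
  have hb0 : 0 < b := div_pos hsu hst
  have hbsq : b ^ 2 = (1 + t) / t := by rw [hb_def, div_pow, hst2, hsu2]
  have hbval : Real.sqrt ((1 + t) / t) = b := by
    rw [Real.sqrt_div ht1.le, ← hst_def, ← hsu_def]
  have hF : Ffun t x p = b * (p - m) := by rw [Ffun, hbval]
  set F := Ffun t x p with hF_def
  set E := Real.exp (-x ^ 2 / (1 + t)) with hE_def
  set g : ℝ → ℝ := fun s => (3 / 2 - (m + s / b) ^ 2) * Real.exp (-s ^ 2) with hg_def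
  -- pointwise rewrite of the integrand
  have key : ∀ y : ℝ, Real.exp (-(x - y) ^ 2 / t) *
      (sπ⁻¹ * (3 / 2 - y ^ 2) * Real.exp (-y ^ 2))
      = E * sπ⁻¹ * g (b * (y - m)) := by
    intro y
    have hyb : m + b * (y - m) / b = y := by field_simp; ring
    have hexp : Real.exp (-(x - y) ^ 2 / t) * Real.exp (-y ^ 2)
        = E * Real.exp (-(b * (y - m)) ^ 2) := by
      rw [hE_def, ← Real.exp_add, ← Real.exp_add]
      congr 1
      rw [mul_pow, hbsq, hm_def]
      field_simp
      ring
    rw [hg_def]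
    simp only [hyb]
    calc Real.exp (-(x - y) ^ 2 / t) * (sπ⁻¹ * (3 / 2 - y ^ 2) * Real.exp (-y ^ 2))
        = (Real.exp (-(x - y) ^ 2 / t) * Real.exp (-y ^ 2)) * (sπ⁻¹ * (3 / 2 - y ^ 2)) := by ring
      _ = (E * Real.exp (-(b * (y - m)) ^ 2)) * (sπ⁻¹ * (3 / 2 - y ^ 2)) := by rw [hexp]
      _ = E * sπ⁻¹ * ((3 / 2 - y ^ 2) * Real.exp (-(b * (y - m)) ^ 2)) := by ring
  -- rewrite the integral
  have step1 : (∫ y in Set.Ioi p, Real.exp (-(x - y) ^ 2 / t) *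
      (sπ⁻¹ * (3 / 2 - y ^ 2) * Real.exp (-y ^ 2)))
      = E * sπ⁻¹ * ∫ y in Set.Ioi p, g (b * (y - m)) := by
    rw [← integral_const_mul]
    exact setIntegral_congr_fun measurableSet_Ioi (fun y _ => key y)
  -- change of variables
  have step2 : (∫ y in Set.Ioi p, g (b * (y - m))) = b⁻¹ * ∫ s in Set.Ioi F, g s := by
    have h1 : (∫ y in Set.Ioi p, g (b * (y - m)))
        = ∫ u in Set.Ioi (p - m), g (b * u) :=
      integral_Ioi_comp_sub (fun u => g (b * u)) p m
    rw [h1, integral_comp_mul_left_Ioi g _ hb0, smul_eq_mul, ← hF]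
  -- compute the gaussian integrals
  set J := ∫ s in Set.Ioi F, Real.exp (-s ^ 2) with hJ_def
  set e := Real.exp (-F ^ 2) with he_def
  set c0 := 3 / 2 - m ^ 2 with hc0
  set c1 := -(2 * m) / b with hc1
  set c2 := -(b ^ 2)⁻¹ with hc2
  have hgsplit : ∀ s : ℝ, g s = c0 * Real.exp (-s ^ 2) + c1 * (s * Real.exp (-s ^ 2))
      + c2 * (s ^ 2 * Real.exp (-s ^ 2)) := by
    intro s
    simp only [hg_def, hc0, hc1, hc2]
    have hbne : b ≠ 0 := ne_of_gt hb0
    field_simp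
    ring
  have step3 : (∫ s in Set.Ioi F, g s)
      = c0 * J + c1 * (e / 2) + c2 * (F * e / 2 + (1 / 2) * J) := by
    rw [setIntegral_congr_fun measurableSet_Ioi (fun s _ => hgsplit s)]
    have ha : IntegrableOn (fun s : ℝ => c0 * Real.exp (-s ^ 2)
        + c1 * (s * Real.exp (-s ^ 2))) (Set.Ioi F) :=
      ((aux_int0 F).const_mul c0).add ((aux_int1 F).const_mul c1)
    have hb2 : IntegrableOn (fun s : ℝ => c2 * (s ^ 2 * Real.exp (-s ^ 2))) (Set.Ioi F) :=
      (aux_int2 F).const_mul c2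
    rw [integral_add ha hb2,
      integral_add ((aux_int0 F).const_mul c0) ((aux_int1 F).const_mul c1),
      integral_const_mul, integral_const_mul, integral_const_mul,
      gauss_mom1, gauss_mom2, ← hJ_def, ← he_def]
  -- put everything together
  have hsqrtpit : Real.sqrt (Real.pi * t) = sπ * st := Real.sqrt_mul Real.pi_pos.le t
  have hstne : st ≠ 0 := ne_of_gt hst
  have hsune : su ≠ 0 := ne_of_gt hsu
  have hsπne : sπ ≠ 0 := ne_of_gt hsπ
  have hbne : b ≠ 0 := ne_of_gt hb0
  have h1t : (1 + t) = su ^ 2 := hsu2.symm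
  have hA : 1 / (sπ * st) * (sπ⁻¹ * (b⁻¹ * (c0 + c2 * (1 / 2))))
      = 1 / (2 * sπ) * (2 / sπ) * P2 t x := by
    have key2 : su ^ 4 * (3 / 2 : ℝ) - x ^ 2 - st ^ 2 * su ^ 2 / 2
        = su ^ 4 + su ^ 2 / 2 - x ^ 2 := by
      rw [show su ^ 4 = (su ^ 2) ^ 2 by ring, hsu2, hst2]; ring
    have hL : 1 / (sπ * st) * (sπ⁻¹ * (b⁻¹ * (c0 + c2 * (1 / 2))))
        = (su ^ 4 * (3 / 2) - x ^ 2 - st ^ 2 * su ^ 2 / 2) / (sπ ^ 2 * su ^ 5) := by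
      rw [hc0, hc2, hb_def, hm_def, h1t]; field_simp; ring
    have hR : 1 / (2 * sπ) * (2 / sπ) * P2 t x
        = (su ^ 4 + su ^ 2 / 2 - x ^ 2) / (sπ ^ 2 * su ^ 5) := by
      rw [P2, ← hsu_def]; field_simp
    rw [hL, hR, key2]
  have hB : 1 / (sπ * st) * (sπ⁻¹ * (b⁻¹ * (c1 * (1 / 2) + c2 * (F * (1 / 2)))))
      = -(1 / (2 * sπ)) * (1 / sπ) * Q2 t x p := by
    rw [hc1, hc2, hF, hb_def, Q2, ← hst_def, hm_def, h1t]
    field_simp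
    ring
  rw [step1, step2, step3, hsqrtpit, erfc, ← hsπ_def, ← hJ_def]
  linear_combination (E * J) * hA + (E * e) * hB
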